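/- arXiv:1703.07863 — 5 statements merged into one kernel-verified Lean document; each statement's English description precedes it below -/
import Mathlib

section
/- The function $D_0$ is convex on $(0,\infty)$: for all $U_1, U_2 > 0$ and $\lambda \in [0,1]$, $D_0(\lambda U_1 + (1-\lambda) U_2) \le \lambda D_0(U_1) + (1-\lambda) D_0(U_2)$. -/
open MeasureTheory Real

/-- The drag function `D₀` from the paper. -/
noncomputable def D0 (β₀ C₀ U : ℝ) : ℝ :=
  C₀ * ((∫ ξ in Set.Iio U, (ξ - U) ^ 2 * Real.exp (-(β₀ * ξ ^ 2))) -
        ∫ ξ in Set.Ioi U, (ξ - U) ^ 2 * Real.exp (-(β₀ * ξ ^ 2)))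

open Set Filter Topology

namespace D0Aux

/-- The Gaussian kernel. -/
noncomputable def phi (β ξ : ℝ) : ℝ := Real.exp (-(β * ξ ^ 2))

/-- The error-function-like primitive. -/
noncomputable def Ef (β x : ℝ) : ℝ := ∫ t in (0:ℝ)..x, phi β t

/-- An antiderivative of `(ξ - U)^2 * phi β ξ`. -/
noncomputable def Hf (β U ξ : ℝ) : ℝ :=
  (2 * U - ξ) / (2 * β) * phi β ξ + (1 / (2 * β) + U ^ 2) * Ef β ξ

lemma phi_cont (β : ℝ) : Continuous (phi β) := by
  unfold phi; fun_prop

lemma phi_nonneg (β ξ : ℝ) : 0 ≤ phi β ξ := (Real.exp_pos _).le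

lemma phi_even (β ξ : ℝ) : phi β (-ξ) = phi β ξ := by simp [phi]

lemma phi_integrable {β : ℝ} (hβ : 0 < β) : Integrable (phi β) := by
  have h : Integrable (fun x : ℝ => Real.exp (-(β * x ^ 2))) := by
    simpa [neg_mul] using integrable_exp_neg_mul_sq hβ
  exact h

lemma rpow_two_eq (x : ℝ) : x ^ (2:ℝ) = x ^ 2 := by
  rw [show (2:ℝ) = ((2:ℕ):ℝ) by norm_num, Real.rpow_natCast]

lemma sq_mul_phi_integrable {β : ℝ} (hβ : 0 < β) :
    Integrable (fun ξ => ξ ^ 2 * phi β ξ) := by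
  have h := integrable_rpow_mul_exp_neg_mul_sq hβ (s := 2) (by norm_num)
  simp only [rpow_two_eq, neg_mul] at h
  simpa [phi] using h

lemma mul_phi_integrable {β : ℝ} (hβ : 0 < β) :
    Integrable (fun ξ => ξ * phi β ξ) := by
  simpa [phi, neg_mul] using integrable_mul_exp_neg_mul_sq hβ

lemma f_integrable {β : ℝ} (hβ : 0 < β) (U : ℝ) :
    Integrable (fun ξ => (ξ - U) ^ 2 * phi β ξ) := by
  have h : (fun ξ => (ξ - U) ^ 2 * phi β ξ) =
      fun ξ => ξ ^ 2 * phi β ξ + (-(2 * U)) * (ξ * phi β ξ) + U ^ 2 * phi β ξ := by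
    funext ξ; ring
  rw [h]
  exact ((sq_mul_phi_integrable hβ).add ((mul_phi_integrable hβ).const_mul _)).add
    ((phi_integrable hβ).const_mul _)

lemma Ef_hasDerivAt (β : ℝ) (x : ℝ) : HasDerivAt (Ef β) (phi β x) x := by
  exact intervalIntegral.integral_hasDerivAt_right
    ((phi_cont β).intervalIntegrable 0 x)
    ((phi_cont β).stronglyMeasurableAtFilter _ _)
    (phi_cont β).continuousAt

lemma phi_hasDerivAt (β x : ℝ) : HasDerivAt (phi β) (-(2 * β * x) * phi β x) x := by
  have h1 : HasDerivAt (fun ξ : ℝ => -(β * ξ ^ 2)) (-(β * (2 * x))) x := by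
    have := ((hasDerivAt_pow 2 x).const_mul β).neg
    refine this.congr_deriv ?_
    norm_num
  have := h1.exp
  refine this.congr_deriv ?_
  unfold phi; ring

lemma Hf_hasDerivAt {β : ℝ} (hβ : 0 < β) (U x : ℝ) :
    HasDerivAt (Hf β U) ((x - U) ^ 2 * phi β x) x := by
  have h1 : HasDerivAt (fun ξ : ℝ => (2 * U - ξ) / (2 * β)) ((0 - 1) / (2 * β)) x :=
    ((hasDerivAt_const x (2*U)).sub (hasDerivAt_id x)).div_const _
  have h2 := (h1.mul (phi_hasDerivAt β x)).add
    (((Ef_hasDerivAt β x).const_mul (1 / (2 * β) + U ^ 2)))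
  refine h2.congr_deriv ?_
  have hβ' : (β:ℝ) ≠ 0 := ne_of_gt hβ
  field_simp
  ring

lemma phi_tendsto_atTop {β : ℝ} (hβ : 0 < β) : Tendsto (phi β) atTop (𝓝 0) := by
  have h1 : Tendsto (fun ξ : ℝ => β * ξ ^ 2) atTop atTop :=
    (tendsto_pow_atTop two_ne_zero).const_mul_atTop hβ
  have := Real.tendsto_exp_neg_atTop_nhds_zero.comp h1
  exact this

lemma mul_phi_tendsto_atTop {β : ℝ} (hβ : 0 < β) :
    Tendsto (fun ξ => ξ * phi β ξ) atTop (𝓝 0) := by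
  have h1 : Tendsto (fun ξ : ℝ => β * ξ ^ 2) atTop atTop :=
    (tendsto_pow_atTop two_ne_zero).const_mul_atTop hβ
  have h2 : Tendsto (fun ξ : ℝ => (β * ξ ^ 2) * Real.exp (-(β * ξ ^ 2))) atTop (𝓝 0) := by
    have := (tendsto_pow_mul_exp_neg_atTop_nhds_zero 1).comp h1
    simpa [Function.comp_def] using this
  have h3 : Tendsto (fun ξ : ℝ => (1 / β) * ((β * ξ ^ 2) * Real.exp (-(β * ξ ^ 2))))
      atTop (𝓝 0) := by
    simpa using h2.const_mul (1 / β)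
  apply squeeze_zero' ?_ ?_ h3
  · filter_upwards [eventually_ge_atTop (0:ℝ)] with ξ hξ
    exact mul_nonneg hξ (phi_nonneg β ξ)
  · filter_upwards [eventually_ge_atTop (1:ℝ)] with ξ hξ
    have hξ0 : (0:ℝ) ≤ ξ := le_trans zero_le_one hξ
    have h4 : ξ ≤ ξ ^ 2 := by nlinarith
    have : ξ * phi β ξ ≤ ξ ^ 2 * phi β ξ :=
      mul_le_mul_of_nonneg_right h4 (phi_nonneg β ξ)
    calc ξ * phi β ξ ≤ ξ ^ 2 * phi β ξ := this
      _ = (1 / β) * ((β * ξ ^ 2) * Real.exp (-(β * ξ ^ 2))) := by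
          unfold phi; field_simp

lemma phi_tendsto_atBot {β : ℝ} (hβ : 0 < β) : Tendsto (phi β) atBot (𝓝 0) := by
  have := (phi_tendsto_atTop hβ).comp tendsto_neg_atBot_atTop
  exact this.congr fun ξ => by simp [Function.comp_apply, phi_even]

lemma mul_phi_tendsto_atBot {β : ℝ} (hβ : 0 < β) :
    Tendsto (fun ξ => ξ * phi β ξ) atBot (𝓝 0) := by
  have := ((mul_phi_tendsto_atTop hβ).comp tendsto_neg_atBot_atTop).neg
  simp only [Function.comp, phi_even, neg_zero] at this
  refine this.congr fun ξ => by ring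

lemma Ef_tendsto_atTop {β : ℝ} (hβ : 0 < β) :
    Tendsto (Ef β) atTop (𝓝 (∫ t in Ioi (0:ℝ), phi β t)) :=
  intervalIntegral_tendsto_integral_Ioi 0 (phi_integrable hβ).integrableOn tendsto_id

lemma integral_Iic_phi {β : ℝ} :
    (∫ t in Iic (0:ℝ), phi β t) = ∫ t in Ioi (0:ℝ), phi β t := by
  calc (∫ t in Iic (0:ℝ), phi β t) = ∫ t in Iic (0:ℝ), phi β (-t) := by simp [phi_even]
    _ = ∫ t in Ioi (-(0:ℝ)), phi β t := _root_.integral_comp_neg_Iic 0 (phi β)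
    _ = ∫ t in Ioi (0:ℝ), phi β t := by norm_num

lemma Ef_tendsto_atBot {β : ℝ} (hβ : 0 < β) :
    Tendsto (Ef β) atBot (𝓝 (-(∫ t in Ioi (0:ℝ), phi β t))) := by
  have h1 : Tendsto (fun a : ℝ => ∫ t in a..(0:ℝ), phi β t) atBot
      (𝓝 (∫ t in Iic (0:ℝ), phi β t)) :=
    intervalIntegral_tendsto_integral_Iic 0 (phi_integrable hβ).integrableOn tendsto_id
  have := h1.neg
  rw [integral_Iic_phi] at this
  refine this.congr fun a => ?_
  rw [Ef, ← intervalIntegral.integral_symm]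

lemma Hf_tendsto_atTop {β : ℝ} (hβ : 0 < β) (U : ℝ) :
    Tendsto (Hf β U) atTop (𝓝 ((1 / (2 * β) + U ^ 2) * ∫ t in Ioi (0:ℝ), phi β t)) := by
  have h1 : Tendsto (fun ξ => (2 * U - ξ) / (2 * β) * phi β ξ) atTop (𝓝 0) := by
    have := (((phi_tendsto_atTop hβ).const_mul (2 * U)).sub
      (mul_phi_tendsto_atTop hβ)).div_const (2 * β)
    simp only [mul_zero, sub_zero, zero_sub, neg_zero, zero_div] at this
    refine this.congr fun ξ => by ring
  have h2 := (Ef_tendsto_atTop hβ).const_mul (1 / (2 * β) + U ^ 2)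
  have h3 := h1.add h2
  rw [zero_add] at h3
  exact h3.congr fun ξ => by rw [Hf]

lemma Hf_tendsto_atBot {β : ℝ} (hβ : 0 < β) (U : ℝ) :
    Tendsto (Hf β U) atBot (𝓝 (-((1 / (2 * β) + U ^ 2) * ∫ t in Ioi (0:ℝ), phi β t))) := by
  have h1 : Tendsto (fun ξ => (2 * U - ξ) / (2 * β) * phi β ξ) atBot (𝓝 0) := by
    have := (((phi_tendsto_atBot hβ).const_mul (2 * U)).sub
      (mul_phi_tendsto_atBot hβ)).div_const (2 * β)
    simp only [mul_zero, sub_zero, zero_sub, neg_zero, zero_div] at this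
    refine this.congr fun ξ => by ring
  have h2 := (Ef_tendsto_atBot hβ).const_mul (1 / (2 * β) + U ^ 2)
  have := h1.add h2
  simp only [zero_add] at this
  refine this.congr' ?_ |>.mono_right ?_
  · exact Eventually.of_forall fun ξ => by rw [Hf]
  · rw [mul_neg]

/-- Closed form for `D0`. -/
lemma D0_eq {β C : ℝ} (hβ : 0 < β) (U : ℝ) :
    D0 β C U = C * (2 * Hf β U U) := by
  have hIic : (∫ ξ in Iic U, (ξ - U) ^ 2 * phi β ξ) =
      Hf β U U - (-((1 / (2 * β) + U ^ 2) * ∫ t in Ioi (0:ℝ), phi β t)) :=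
    MeasureTheory.integral_Iic_of_hasDerivAt_of_tendsto
      (Hf_hasDerivAt hβ U U).continuousAt.continuousWithinAt
      (fun x _ => Hf_hasDerivAt hβ U x)
      (f_integrable hβ U).integrableOn
      (Hf_tendsto_atBot hβ U)
  have hIoi : (∫ ξ in Ioi U, (ξ - U) ^ 2 * phi β ξ) =
      ((1 / (2 * β) + U ^ 2) * ∫ t in Ioi (0:ℝ), phi β t) - Hf β U U :=
    MeasureTheory.integral_Ioi_of_hasDerivAt_of_tendsto
      (Hf_hasDerivAt hβ U U).continuousAt.continuousWithinAt
      (fun x _ => Hf_hasDerivAt hβ U x)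
      (f_integrable hβ U).integrableOn
      (Hf_tendsto_atTop hβ U)
  have hIio : (∫ ξ in Iio U, (ξ - U) ^ 2 * phi β ξ) =
      ∫ ξ in Iic U, (ξ - U) ^ 2 * phi β ξ := by
    rw [MeasureTheory.integral_Iic_eq_integral_Iio]
  unfold D0
  simp only [show ∀ ξ, Real.exp (-(β * ξ ^ 2)) = phi β ξ from fun _ => rfl]
  rw [hIio, hIic, hIoi]
  ring

/-- The elementary function equal to `D0 β 1`. -/
noncomputable def g (β U : ℝ) : ℝ := U / β * phi β U + (1 / β + 2 * U ^ 2) * Ef β U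

lemma two_Hf_eq_g {β : ℝ} (hβ : 0 < β) (U : ℝ) : 2 * Hf β U U = g β U := by
  have hβ' : (β:ℝ) ≠ 0 := ne_of_gt hβ
  unfold Hf g
  field_simp
  ring

lemma g_hasDerivAt {β : ℝ} (hβ : 0 < β) (U : ℝ) :
    HasDerivAt (g β) (2 / β * phi β U + 4 * U * Ef β U) U := by
  have hβ' : (β:ℝ) ≠ 0 := ne_of_gt hβ
  have h1 : HasDerivAt (fun U : ℝ => U / β) (1 / β) U := by
    simpa using (hasDerivAt_id U).div_const β
  have h2 : HasDerivAt (fun U : ℝ => 1 / β + 2 * U ^ 2) (2 * (2 * U)) U := by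
    have := ((hasDerivAt_pow 2 U).const_mul 2).const_add (1 / β)
    simpa using this
  have h := (h1.mul (phi_hasDerivAt β U)).add (h2.mul (Ef_hasDerivAt β U))
  refine h.congr_deriv ?_
  field_simp
  ring

lemma g'_hasDerivAt {β : ℝ} (hβ : 0 < β) (U : ℝ) :
    HasDerivAt (fun U => 2 / β * phi β U + 4 * U * Ef β U) (4 * Ef β U) U := by
  have hβ' : (β:ℝ) ≠ 0 := ne_of_gt hβ
  have h1 := (phi_hasDerivAt β U).const_mul (2 / β)
  have h2 : HasDerivAt (fun U : ℝ => 4 * U) 4 U := by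
    simpa using (hasDerivAt_id U).const_mul 4
  have h := h1.add (h2.mul (Ef_hasDerivAt β U))
  refine h.congr_deriv ?_
  field_simp
  ring

lemma Ef_nonneg {β : ℝ} (U : ℝ) (hU : 0 ≤ U) : 0 ≤ Ef β U :=
  intervalIntegral.integral_nonneg hU fun t _ => phi_nonneg β t

lemma g_convexOn {β : ℝ} (hβ : 0 < β) : ConvexOn ℝ (Ioi (0:ℝ)) (g β) := by
  apply convexOn_of_hasDerivWithinAt2_nonneg (f' := fun U => 2 / β * phi β U + 4 * U * Ef β U)
    (f'' := fun U => 4 * Ef β U) (convex_Ioi 0)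
  · exact fun x _ => (g_hasDerivAt hβ x).continuousAt.continuousWithinAt
  · intro x _
    exact (g_hasDerivAt hβ x).hasDerivWithinAt
  · intro x _
    exact (g'_hasDerivAt hβ x).hasDerivWithinAt
  · intro x hx
    rw [interior_Ioi] at hx
    have : 0 ≤ Ef β x := Ef_nonneg x (le_of_lt hx)
    linarith

end D0Aux

/-- `D₀` is convex on `(0, ∞)`. -/
theorem D0_convex (β₀ C₀ : ℝ) (hβ₀ : 0 < β₀) (hC₀ : 0 < C₀) :
    ∀ U₁ U₂ : ℝ, 0 < U₁ → 0 < U₂ → ∀ lam : ℝ, 0 ≤ lam → lam ≤ 1 →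
      D0 β₀ C₀ (lam * U₁ + (1 - lam) * U₂) ≤
        lam * D0 β₀ C₀ U₁ + (1 - lam) * D0 β₀ C₀ U₂ := by
  intro U₁ U₂ hU₁ hU₂ lam hl0 hl1
  have hD : ∀ U, D0 β₀ C₀ U = C₀ * D0Aux.g β₀ U := by
    intro U
    rw [D0Aux.D0_eq hβ₀ U, D0Aux.two_Hf_eq_g hβ₀ U]
  have hconv := D0Aux.g_convexOn hβ₀
  have h := hconv.2 (Set.mem_Ioi.2 hU₁) (Set.mem_Ioi.2 hU₂) hl0
    (show (0:ℝ) ≤ 1 - lam by linarith) (show lam + (1 - lam) = 1 by ring)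
  simp only [smul_eq_mul] at h
  rw [hD, hD, hD]
  nlinarith [mul_le_mul_of_nonneg_left h (le_of_lt hC₀)]
end

section
/- The function $D_0$ is differentiable on $[0,\infty)$ and there exists a constant $C_1 > 0$ (depending only on $\beta_0$ and $C_0$) such that $D_0'(U) \ge C_1$ for all $U \ge 0$; consequently $D_0(U) \ge C_1 U$ for all $U \ge 0$, i.e. $D_0$ grows at least linearly. -/
open MeasureTheory Real

namespace D0Aux

open Set Filter Topology

/-- The Gaussian weight. -/
noncomputable def gauss (β x : ℝ) : ℝ := Real.exp (-(β * x ^ 2))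

lemma gauss_neg (β x : ℝ) : gauss β (-x) = gauss β x := by simp [gauss, neg_sq]

lemma gauss_pos (β x : ℝ) : 0 < gauss β x := Real.exp_pos _

lemma continuous_gauss (β : ℝ) : Continuous (gauss β) :=
  Real.continuous_exp.comp ((continuous_const.mul (continuous_pow 2)).neg)

variable {β : ℝ}

lemma intE (hβ : 0 < β) : Integrable (gauss β) := by
  have h := integrable_exp_neg_mul_sq hβ; simp only [neg_mul] at h; exact h

lemma intE1 (hβ : 0 < β) : Integrable (fun x : ℝ => x * gauss β x) := by
  have h := integrable_rpow_mul_exp_neg_mul_sq hβ (s := 1) (by norm_num)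
  simpa [gauss, neg_mul, Real.rpow_one] using h

lemma intE2 (hβ : 0 < β) : Integrable (fun x : ℝ => x ^ 2 * gauss β x) := by
  have h := integrable_rpow_mul_exp_neg_mul_sq hβ (s := 2) (by norm_num)
  simpa [gauss, neg_mul, Real.rpow_two] using h

/-- Derivative of the Gaussian. -/
lemma hasDerivAt_gauss (β x : ℝ) :
    HasDerivAt (gauss β) (-(2 * β * x) * gauss β x) x := by
  have h1 : HasDerivAt (fun y : ℝ => -(β * y ^ 2)) (-(2 * β * x)) x := by
    have := ((hasDerivAt_pow 2 x).const_mul β).neg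
    refine this.congr_deriv ?_
    ring
  have h2 := h1.exp
  have h3 : -(2 * β * x) * gauss β x = Real.exp (-(β * x ^ 2)) * -(2 * β * x) := by
    rw [gauss]; ring
  rw [h3]
  exact h2

/-- A generic FTC for integrals over `Iio`. -/
lemma hasDerivAt_integral_Iio {g : ℝ → ℝ} (hint : Integrable g) (hc : Continuous g) (U : ℝ) :
    HasDerivAt (fun u => ∫ x in Iio u, g x) (g U) U := by
  have key : (fun u => ∫ x in Iio u, g x)
      = fun u => (∫ x in Iic (0 : ℝ), g x) + ∫ x in (0 : ℝ)..u, g x := by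
    funext u
    rw [← integral_Iic_eq_integral_Iio,
      ← intervalIntegral.integral_Iic_sub_Iic hint.integrableOn hint.integrableOn]
    ring
  rw [key]
  exact (intervalIntegral.integral_hasDerivAt_right hint.intervalIntegrable
    (hc.stronglyMeasurableAtFilter _ _) hc.continuousAt).const_add _

/-- Reflection for even functions. -/
lemma integral_Ioi_eq_integral_Iio_neg {f : ℝ → ℝ} (heven : ∀ x, f (-x) = f x) (u : ℝ) :
    ∫ x in Ioi u, f x = ∫ x in Iio (-u), f x := by
  have h := integral_comp_neg_Iic (-u) f
  simp only [heven, neg_neg] at h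
  rw [← integral_Iic_eq_integral_Iio, ← h]

/-- Splitting the real line at a point. -/
lemma integral_split {f : ℝ → ℝ} (hint : Integrable f) (u : ℝ) :
    (∫ x in Iio u, f x) + ∫ x in Ioi u, f x = ∫ x, f x := by
  rw [← integral_Ici_eq_integral_Ioi]
  exact intervalIntegral.integral_Iio_add_Ici hint.integrableOn hint.integrableOn

/-- Closed form of the Gaussian first-moment integral over `Ioi`. -/
lemma GO_eq (hβ : 0 < β) (a : ℝ) :
    ∫ x in Ioi a, x * gauss β x = gauss β a / (2 * β) := by
  have hd : ∀ x ∈ Ici a, HasDerivAt (fun y => -gauss β y / (2 * β)) (x * gauss β x) x := by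
    intro x _
    have h := (hasDerivAt_gauss β x).neg.div_const (2 * β)
    refine h.congr_deriv ?_
    field_simp
  have h2 : Tendsto (gauss β) atTop (𝓝 0) := by
    have h1 : Tendsto (fun y : ℝ => β * y ^ 2) atTop atTop :=
      (tendsto_pow_atTop two_ne_zero).const_mul_atTop hβ
    have := Real.tendsto_exp_atBot.comp (tendsto_neg_atBot_iff.mpr h1)
    exact this
  have hlim : Tendsto (fun y => -gauss β y / (2 * β)) atTop (𝓝 0) := by
    simpa using (h2.neg).div_const (2 * β)
  have := integral_Ioi_of_hasDerivAt_of_tendsto' hd (intE1 hβ).integrableOn hlim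
  rw [this]
  ring

/-- Closed form of the Gaussian first-moment integral over `Iio`. -/
lemma GI_eq (hβ : 0 < β) (u : ℝ) :
    ∫ x in Iio u, x * gauss β x = -(gauss β u / (2 * β)) := by
  have h := integral_comp_neg_Iic u (fun x => x * gauss β x)
  simp only [gauss_neg, neg_mul, integral_neg] at h
  rw [← integral_Iic_eq_integral_Iio, ← neg_neg (∫ x in Iic u, x * gauss β x), h,
    GO_eq hβ (-u), gauss_neg]

noncomputable def HI (β u : ℝ) : ℝ := ∫ x in Iio u, gauss β x
noncomputable def FI (β u : ℝ) : ℝ := ∫ x in Iio u, x ^ 2 * gauss β x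
noncomputable def TH (β : ℝ) : ℝ := ∫ x : ℝ, gauss β x
noncomputable def TF (β : ℝ) : ℝ := ∫ x : ℝ, x ^ 2 * gauss β x

lemma hasDerivAt_HI (hβ : 0 < β) (u : ℝ) : HasDerivAt (HI β) (gauss β u) u :=
  hasDerivAt_integral_Iio (intE hβ) (continuous_gauss β) u

lemma hasDerivAt_FI (hβ : 0 < β) (u : ℝ) : HasDerivAt (FI β) (u ^ 2 * gauss β u) u :=
  hasDerivAt_integral_Iio (intE2 hβ) ((continuous_pow 2).mul (continuous_gauss β)) u

lemma HO_eq (hβ : 0 < β) (u : ℝ) : ∫ x in Ioi u, gauss β x = TH β - HI β u := by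
  have := integral_split (intE hβ) u
  rw [TH, HI]; linarith

lemma FO_eq (hβ : 0 < β) (u : ℝ) :
    ∫ x in Ioi u, x ^ 2 * gauss β x = TF β - FI β u := by
  have := integral_split (intE2 hβ) u
  rw [TF, FI]; linarith

/-- Expansion of the shifted-square integrals. -/
lemma expand (hβ : 0 < β) (U : ℝ) (s : Set ℝ) :
    ∫ ξ in s, (ξ - U) ^ 2 * gauss β ξ =
      (∫ ξ in s, ξ ^ 2 * gauss β ξ) - 2 * U * (∫ ξ in s, ξ * gauss β ξ)
        + U ^ 2 * ∫ ξ in s, gauss β ξ := by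
  have h2 : IntegrableOn (fun ξ : ℝ => ξ ^ 2 * gauss β ξ) s := (intE2 hβ).integrableOn
  have h1 : IntegrableOn (fun ξ : ℝ => 2 * U * (ξ * gauss β ξ)) s :=
    (((intE1 hβ)).const_mul (2 * U)).integrableOn
  have h0 : IntegrableOn (fun ξ : ℝ => U ^ 2 * gauss β ξ) s :=
    ((intE hβ).const_mul (U ^ 2)).integrableOn
  have key : (fun ξ : ℝ => (ξ - U) ^ 2 * gauss β ξ)
      = fun ξ => (ξ ^ 2 * gauss β ξ - 2 * U * (ξ * gauss β ξ)) + U ^ 2 * gauss β ξ := by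
    funext ξ; ring
  have hsub : IntegrableOn
      (fun ξ : ℝ => ξ ^ 2 * gauss β ξ - 2 * U * (ξ * gauss β ξ)) s := h2.sub h1
  rw [key, integral_add hsub h0, integral_sub h2 h1, integral_const_mul, integral_const_mul]

/-- The closed form of `D0` in terms of `FI`, `HI` and the Gaussian. -/
lemma D0_eq_s2 (hβ : 0 < β) (C : ℝ) (u : ℝ) :
    D0 β C u = C * (2 * FI β u - TF β + 2 * u * gauss β u / β
      + (2 * u ^ 2 * HI β u - u ^ 2 * TH β)) := by
  have hIio := expand hβ u (Iio u)
  have hIoi := expand hβ u (Ioi u)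
  rw [D0]
  simp only [show ∀ ξ : ℝ, Real.exp (-(β * ξ ^ 2)) = gauss β ξ from fun _ => rfl]
  rw [hIio, hIoi, GI_eq hβ u, GO_eq hβ u, HO_eq hβ u, FO_eq hβ u]
  rw [show (∫ x in Iio u, gauss β x) = HI β u from rfl,
    show (∫ x in Iio u, x ^ 2 * gauss β x) = FI β u from rfl]
  field_simp
  ring

/-- `D0` is differentiable with explicit derivative. -/
lemma hasDerivAt_D0 (hβ : 0 < β) (C u : ℝ) :
    HasDerivAt (D0 β C) (C * (2 * gauss β u / β + 2 * u * (2 * HI β u - TH β))) u := by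
  have hfun : D0 β C = fun u => C * (2 * FI β u - TF β + 2 * u * gauss β u / β
      + (2 * u ^ 2 * HI β u - u ^ 2 * TH β)) := funext (D0_eq_s2 hβ C)
  rw [hfun]
  have hFI := hasDerivAt_FI hβ u
  have hHI := hasDerivAt_HI hβ u
  have hg := hasDerivAt_gauss β u
  have h3 : HasDerivAt (fun v => 2 * v * gauss β v / β)
      ((2 * 1 * gauss β u + 2 * u * (-(2 * β * u) * gauss β u)) / β) u :=
    (((hasDerivAt_id u).const_mul 2).mul hg).div_const β
  have h4 : HasDerivAt (fun v => 2 * v ^ 2 * HI β v)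
      (2 * (2 * u ^ 1) * HI β u + 2 * u ^ 2 * gauss β u) u :=
    ((hasDerivAt_pow 2 u).const_mul 2).mul hHI
  have h5 : HasDerivAt (fun v : ℝ => v ^ 2 * TH β) (2 * u ^ 1 * TH β) u :=
    (hasDerivAt_pow 2 u).mul_const (TH β)
  have H := ((((hFI.const_mul 2).sub_const (TF β)).add h3).add (h4.sub h5)).const_mul C
  refine H.congr_deriv ?_
  have hβ' : β ≠ 0 := ne_of_gt hβ
  field_simp
  ring_nf
  try tauto

/-- The symmetric difference `2 HI - TH` as an interval integral. -/
lemma twoHI_sub_TH (hβ : 0 < β) (u : ℝ) :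
    2 * HI β u - TH β = ∫ x in (-u)..u, gauss β x := by
  have h1 : ∫ x in Ioi u, gauss β x = HI β (-u) := by
    rw [integral_Ioi_eq_integral_Iio_neg (gauss_neg β) u]; rfl
  have h2 := HO_eq hβ u
  rw [h1] at h2
  have h3 : (∫ x in (-u)..u, gauss β x)
      = (∫ x in Iic u, gauss β x) - ∫ x in Iic (-u), gauss β x :=
    (intervalIntegral.integral_Iic_sub_Iic (intE hβ).integrableOn (intE hβ).integrableOn).symm
  rw [h3, integral_Iic_eq_integral_Iio, integral_Iic_eq_integral_Iio]
  rw [show (∫ x in Iio u, gauss β x) = HI β u from rfl,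
    show (∫ x in Iio (-u), gauss β x) = HI β (-u) from rfl]
  linarith

/-- Uniform positive lower bound on the derivative factor. -/
lemma deriv_factor_lower (hβ : 0 < β) {u : ℝ} (hu : 0 ≤ u) :
    2 * Real.exp (-1) / β ≤ 2 * gauss β u / β + 2 * u * (2 * HI β u - TH β) := by
  set a : ℝ := Real.sqrt β⁻¹ with ha
  have ha0 : 0 < a := Real.sqrt_pos.mpr (by positivity)
  have ha2 : a ^ 2 = β⁻¹ := Real.sq_sqrt (by positivity)
  have hba : β * a ^ 2 = 1 := by rw [ha2]; field_simp
  have hJnonneg : ∀ v : ℝ, 0 ≤ v → 0 ≤ 2 * HI β v - TH β := by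
    intro v hv
    rw [twoHI_sub_TH hβ]
    exact intervalIntegral.integral_nonneg (by linarith) (fun x _ => (gauss_pos β x).le)
  rcases le_total u a with h | h
  · -- small u : use the Gaussian term
    have hg : Real.exp (-1) ≤ gauss β u := by
      rw [gauss]
      apply Real.exp_le_exp.mpr
      have : u ^ 2 ≤ a ^ 2 := pow_le_pow_left₀ hu h 2
      nlinarith
    have h1 : 2 * Real.exp (-1) / β ≤ 2 * gauss β u / β := by
      gcongr
    have h2 : 0 ≤ 2 * u * (2 * HI β u - TH β) :=
      mul_nonneg (by linarith) (hJnonneg u hu)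
    linarith
  · -- large u : use the mass term
    have hJa : 2 * a * Real.exp (-1) ≤ 2 * HI β a - TH β := by
      rw [twoHI_sub_TH hβ]
      have hmono : ∫ x in (-a)..a, Real.exp (-1) ≤ ∫ x in (-a)..a, gauss β x := by
        apply intervalIntegral.integral_mono_on (by linarith)
          (intervalIntegrable_const) ((intE hβ).intervalIntegrable)
        intro x hx
        rw [gauss]
        apply Real.exp_le_exp.mpr
        have hx2 : x ^ 2 ≤ a ^ 2 := sq_le_sq' hx.1 hx.2
        nlinarith
      have hconst : ∫ x in (-a)..a, Real.exp (-1) = 2 * a * Real.exp (-1) := by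
        rw [intervalIntegral.integral_const, smul_eq_mul]
        ring
      linarith [hmono, hconst.symm.le]
    have hmonoHI : HI β a ≤ HI β u := by
      apply setIntegral_mono_set (intE hβ).integrableOn
        (Filter.Eventually.of_forall fun x => (gauss_pos β x).le)
      exact Filter.Eventually.of_forall (fun x hx => lt_of_lt_of_le hx h)
    have hJu : 2 * a * Real.exp (-1) ≤ 2 * HI β u - TH β := by linarith
    have hgpos : 0 ≤ 2 * gauss β u / β :=
      le_of_lt (div_pos (by linarith [gauss_pos β u]) hβ)
    have hexp : 0 < Real.exp (-1) := Real.exp_pos _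
    have key : 2 * a * (2 * a * Real.exp (-1)) ≤ 2 * u * (2 * HI β u - TH β) := by
      exact mul_le_mul (by linarith) hJu (mul_nonneg (by linarith) hexp.le) (by linarith)
    have e1 : 2 * a * (2 * a * Real.exp (-1)) = 4 * Real.exp (-1) / β := by
      rw [div_eq_mul_inv, ← ha2]; ring
    have key2 : 4 * Real.exp (-1) / β ≤ 2 * u * (2 * HI β u - TH β) := by
      rw [← e1]; exact key
    have h4 : 2 * Real.exp (-1) / β ≤ 4 * Real.exp (-1) / β := by
      gcongr
      linarith
    linarith

lemma D0_zero (hβ : 0 < β) (C : ℝ) : D0 β C 0 = 0 := by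
  rw [D0]
  have h := integral_Ioi_eq_integral_Iio_neg
    (f := fun x => (x - 0) ^ 2 * Real.exp (-(β * x ^ 2))) (by intro x; simp [neg_sq]) 0
  rw [h]
  simp

end D0Aux

open D0Aux Set Filter

/-- `D₀` is differentiable on `[0, ∞)` with derivative bounded below by a positive
constant `C₁` (depending only on `β₀` and `C₀`); consequently `D₀(U) ≥ C₁ U`,
i.e. `D₀` grows at least linearly. -/
theorem D0_deriv_lower_bound (β₀ C₀ : ℝ) (hβ₀ : 0 < β₀) (hC₀ : 0 < C₀) :
    ∃ C₁ : ℝ, 0 < C₁ ∧ ∃ D0' : ℝ → ℝ,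
      (∀ U : ℝ, 0 ≤ U →
        HasDerivWithinAt (D0 β₀ C₀) (D0' U) (Set.Ici 0) U) ∧
      (∀ U : ℝ, 0 ≤ U → C₁ ≤ D0' U) ∧
      (∀ U : ℝ, 0 ≤ U → C₁ * U ≤ D0 β₀ C₀ U) := by
  refine ⟨C₀ * (2 * Real.exp (-1) / β₀), by positivity,
    fun U => C₀ * (2 * gauss β₀ U / β₀ + 2 * U * (2 * HI β₀ U - TH β₀)), ?_, ?_, ?_⟩
  · intro U _
    exact (hasDerivAt_D0 hβ₀ C₀ U).hasDerivWithinAt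
  · intro U hU
    exact mul_le_mul_of_nonneg_left (deriv_factor_lower hβ₀ hU) hC₀.le
  · intro U hU
    have hcont : ContinuousOn (D0 β₀ C₀) (Ici 0) := fun x _ =>
      ((hasDerivAt_D0 hβ₀ C₀ x).differentiableAt.continuousAt).continuousWithinAt
    have hderiv : ∀ x ∈ interior (Ici (0 : ℝ)),
        C₀ * (2 * Real.exp (-1) / β₀) ≤ deriv (D0 β₀ C₀) x := by
      intro x hx
      rw [interior_Ici] at hx
      rw [(hasDerivAt_D0 hβ₀ C₀ x).deriv]
      exact mul_le_mul_of_nonneg_left (deriv_factor_lower hβ₀ (le_of_lt hx)) hC₀.le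
    have hdiff : DifferentiableOn ℝ (D0 β₀ C₀) (interior (Ici (0:ℝ))) := fun x _ =>
      (hasDerivAt_D0 hβ₀ C₀ x).differentiableAt.differentiableWithinAt
    have := (convex_Ici (0 : ℝ)).mul_sub_le_image_sub_of_le_deriv hcont hdiff hderiv
      0 self_mem_Ici U hU hU
    rw [D0_zero hβ₀ C₀] at this
    simpa using this
end

section
/- Let $d \ge 2$, $R > 0$, $L > 0$, $t > 0$, let $W : [0,\infty) \to \mathbb{R}$ be continuous with $V_\infty/2 \le W(\sigma) < V_\infty$ for all $\sigma \ge 0$, and set $X(t) = L + \int_0^t W(\sigma) \, d\sigma$. Let $\xi_1 \in \mathbb{R}$ and $x_\perp, \xi_\perp \in \mathbb{R}^{d-1}$ satisfy: (i) $|x_\perp| \le R/2$, (ii) $|\xi_\perp| \le \frac{R(\xi_1 + V_\infty/2)}{4(L + V_\infty t)}$, and (iii) $\xi_1 \ge \frac{3}{2} V_\infty + \frac{2L}{t}$. Then the set $S = \{ s \in (0, t) : \xi_1 + \langle W \rangle_{s,t} = 2 X(t)/(t-s) \}$ is nonempty, its supremum $\sigma_2$ belongs to $S$, and $|x_\perp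 - (t - \sigma_2)\xi_\perp| < R$. -/
open MeasureTheory Real

/-- Time average `⟨W⟩_{s,t} = (t-s)⁻¹ ∫_s^t W(σ) dσ`. -/
noncomputable def avg (W : ℝ → ℝ) (s t : ℝ) : ℝ :=
  (t - s)⁻¹ * ∫ σ in s..t, W σ

/-- Lemma 4.5 of the paper (sufficient condition for a wall-mediated pre-collision):
under the conditions (i) `|x⊥| ≤ R/2`, (ii) `|ξ⊥| ≤ R(ξ₁ + V∞/2)/(4(L + V∞ t))` and
(iii) `ξ₁ ≥ (3/2)V∞ + 2L/t`, the set of pre-collision times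
`S = { s ∈ (0,t) : ξ₁ + ⟨W⟩_{s,t} = 2X(t)/(t-s) }` is nonempty, its supremum `σ₂`
belongs to `S`, and `|x⊥ - (t - σ₂) ξ⊥| < R`. -/
theorem precollision_sufficient_condition
    (d : ℕ) (hd : 2 ≤ d) (Vinf : ℝ) (hVinf : 0 < Vinf)
    (R : ℝ) (hR : 0 < R) (L : ℝ) (hL : 0 < L) (t : ℝ) (ht : 0 < t)
    (W : ℝ → ℝ) (hWcont : ContinuousOn W (Set.Ici 0))
    (hWbound : ∀ σ : ℝ, 0 ≤ σ → Vinf / 2 ≤ W σ ∧ W σ < Vinf)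
    (ξ₁ : ℝ) (xperp ξperp : EuclideanSpace ℝ (Fin (d - 1)))
    (hx : ‖xperp‖ ≤ R / 2)
    (hξperp : ‖ξperp‖ ≤ R * (ξ₁ + Vinf / 2) / (4 * (L + Vinf * t)))
    (hξ₁ : 3 / 2 * Vinf + 2 * L / t ≤ ξ₁) :
    (let X : ℝ := L + ∫ σ in (0:ℝ)..t, W σ
     let S : Set ℝ := {s | s ∈ Set.Ioo 0 t ∧ ξ₁ + avg W s t = 2 * X / (t - s)}
     S.Nonempty ∧ sSup S ∈ S ∧ ‖xperp - (t - sSup S) • ξperp‖ < R) := by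
  intro X S
  -- basic facts
  have hWc : ContinuousOn W (Set.Icc 0 t) := hWcont.mono (fun x hx => hx.1)
  have hIcc : Set.uIcc (0:ℝ) t = Set.Icc 0 t := Set.uIcc_of_le ht.le
  have hWint : IntegrableOn W (Set.uIcc 0 t) volume := by
    rw [hIcc]; exact hWc.integrableOn_compact isCompact_Icc
  have hIntW : ∀ s ∈ Set.Icc (0:ℝ) t, IntervalIntegrable W volume s t := by
    intro s hs
    apply ContinuousOn.intervalIntegrable
    apply hWc.mono
    rw [Set.uIcc_of_le hs.2]
    exact Set.Icc_subset_Icc hs.1 le_rfl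
  -- the function f
  set f : ℝ → ℝ := fun s => ξ₁ * (t - s) + (∫ σ in s..t, W σ) - 2 * X with hf
  have hfc : ContinuousOn f (Set.Icc 0 t) := by
    apply ContinuousOn.sub
    apply ContinuousOn.add (by fun_prop)
    · rw [← hIcc]; exact intervalIntegral.continuousOn_primitive_interval_left hWint
    · exact continuousOn_const
  -- integral bounds
  have hint_lt : (∫ σ in (0:ℝ)..t, W σ) < Vinf * t := by
    have : (∫ σ in (0:ℝ)..t, W σ) < ∫ σ in (0:ℝ)..t, Vinf := by
      apply intervalIntegral.integral_lt_integral_of_continuousOn_of_le_of_exists_lt ht hWc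
        continuousOn_const
      · exact fun x hx => ((hWbound x hx.1.le).2).le
      · exact ⟨0, Set.left_mem_Icc.2 ht.le, (hWbound 0 le_rfl).2⟩
    simpa [mul_comm] using this
  have hint_nonneg : 0 ≤ (∫ σ in (0:ℝ)..t, W σ) := by
    apply intervalIntegral.integral_nonneg ht.le
    intro u hu
    exact le_trans (by positivity) (hWbound u hu.1).1
  have hX_pos : 0 < X := by positivity
  have hX_lt : X < L + Vinf * t := by simp only [X]; linarith
  -- f t < 0 < f 0
  have hft : f t < 0 := by simp [hf]; linarith
  have hf0 : 0 < f 0 := by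
    have h1 : ξ₁ * t ≥ 3/2 * Vinf * t + 2 * L := by
      have := mul_le_mul_of_nonneg_right hξ₁ ht.le
      rw [add_mul] at this
      rw [div_mul_cancel₀] at this
      · linarith
      · exact ht.ne'
    simp only [hf, X, sub_zero]
    nlinarith
  -- membership characterization
  have hSchar : ∀ s, s ∈ S ↔ s ∈ Set.Ioo 0 t ∧ f s = 0 := by
    intro s
    constructor
    · rintro ⟨hs, heq⟩
      refine ⟨hs, ?_⟩
      have hts : t - s ≠ 0 := by have := hs.2; intro h; linarith [sub_pos.2 hs.2, h]
      have hts' : 0 < t - s := sub_pos.2 hs.2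
      rw [avg] at heq
      field_simp at heq
      simp only [hf]
      nlinarith [heq]
    · rintro ⟨hs, heq⟩
      refine ⟨hs, ?_⟩
      have hts' : 0 < t - s := sub_pos.2 hs.2
      rw [avg]
      simp only [hf] at heq
      field_simp
      nlinarith [heq]
  -- nonemptiness via IVT
  have hIVT : ∃ s ∈ Set.Icc (0:ℝ) t, f s = 0 := by
    have := intermediate_value_Icc' ht.le hfc
    have h0 : (0:ℝ) ∈ Set.Icc (f t) (f 0) := ⟨hft.le, hf0.le⟩
    obtain ⟨s, hs, hfs⟩ := this h0
    exact ⟨s, hs, hfs⟩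
  obtain ⟨s₀, hs₀, hfs₀⟩ := hIVT
  have hs₀0 : 0 < s₀ := by
    rcases hs₀.1.lt_or_eq with h | h
    · exact h
    · exfalso; rw [← h] at hfs₀; linarith
  have hs₀t : s₀ < t := by
    rcases hs₀.2.lt_or_eq with h | h
    · exact h
    · exfalso; rw [h] at hfs₀; linarith
  have hs₀S : s₀ ∈ S := (hSchar s₀).2 ⟨⟨hs₀0, hs₀t⟩, hfs₀⟩
  have hSne : S.Nonempty := ⟨s₀, hs₀S⟩
  -- sup
  have hSbdd : BddAbove S := ⟨t, fun x hx => ((hSchar x).1 hx).1.2.le⟩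
  set σ₂ := sSup S with hσ₂
  have hσ₂cl : σ₂ ∈ closure S := csSup_mem_closure hSne hSbdd
  have hT : closure S ⊆ {s ∈ Set.Icc 0 t | f s = 0} := by
    apply closure_minimal
    · intro x hx
      obtain ⟨hxI, hxf⟩ := (hSchar x).1 hx
      exact ⟨⟨hxI.1.le, hxI.2.le⟩, hxf⟩
    · exact hfc.preimage_isClosed_of_isClosed isClosed_Icc isClosed_singleton
  obtain ⟨hσ₂Icc, hfσ₂⟩ := hT hσ₂cl
  have hσ₂ge : s₀ ≤ σ₂ := le_csSup hSbdd hs₀S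
  have hσ₂t : σ₂ < t := by
    rcases hσ₂Icc.2.lt_or_eq with h | h
    · exact h
    · exfalso; rw [h] at hfσ₂; linarith
  have hσ₂S : σ₂ ∈ S := (hSchar σ₂).2 ⟨⟨lt_of_lt_of_le hs₀0 hσ₂ge, hσ₂t⟩, hfσ₂⟩
  refine ⟨hSne, hσ₂S, ?_⟩
  -- final estimate
  have hts : 0 < t - σ₂ := sub_pos.2 hσ₂t
  have havg : Vinf / 2 * (t - σ₂) ≤ ∫ σ in σ₂..t, W σ := by
    have := intervalIntegral.integral_mono_on (f := fun _ => Vinf / 2) (g := W) hσ₂t.le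
      intervalIntegrable_const (hIntW σ₂ ⟨(lt_of_lt_of_le hs₀0 hσ₂ge).le, hσ₂t.le⟩)
      (fun x hx => (hWbound x (le_trans (lt_of_lt_of_le hs₀0 hσ₂ge).le hx.1)).1)
    simp only [intervalIntegral.integral_const, smul_eq_mul] at this
    linarith
  have hkey : (ξ₁ + Vinf / 2) * (t - σ₂) ≤ 2 * X := by
    simp only [hf] at hfσ₂
    set I := ∫ σ in σ₂..t, W σ with hI
    have hring : (ξ₁ + Vinf / 2) * (t - σ₂) = ξ₁ * (t - σ₂) + Vinf / 2 * (t - σ₂) := by ring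
    clear_value I
    clear hσ₂cl hT hσ₂Icc hσ₂S hSchar hfc hft hf0 hfs₀ hs₀S hf
    clear_value σ₂ X
    -- values cleared
    linarith [havg, hfσ₂, hring]
  have hpos : 0 < L + Vinf * t := by positivity
  have hξ₁pos : 0 < ξ₁ + Vinf / 2 := by
    have : 0 < 2 * L / t := by positivity
    linarith
  have hbd : (t - σ₂) * ‖ξperp‖ < R / 2 := by
    calc (t - σ₂) * ‖ξperp‖ ≤ (t - σ₂) * (R * (ξ₁ + Vinf / 2) / (4 * (L + Vinf * t))) :=
          mul_le_mul_of_nonneg_left hξperp hts.le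
      _ < R / 2 := by
          have h2 : (ξ₁ + Vinf / 2) * (t - σ₂) < 2 * (L + Vinf * t) :=
            lt_of_le_of_lt hkey (by linarith)
          have h3 := mul_lt_mul_of_pos_left h2 hR
          rw [mul_div_assoc', div_lt_iff₀ (by positivity : (0:ℝ) < 4 * (L + Vinf * t))]
          nlinarith [h3]
  calc ‖xperp - (t - σ₂) • ξperp‖ ≤ ‖xperp‖ + ‖(t - σ₂) • ξperp‖ := norm_sub_le _ _
    _ = ‖xperp‖ + |t - σ₂| * ‖ξperp‖ := by rw [norm_smul, Real.norm_eq_abs]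
    _ = ‖xperp‖ + (t - σ₂) * ‖ξperp‖ := by rw [abs_of_pos hts]
    _ < R / 2 + R / 2 := by linarith
    _ = R := by ring
end

section
/- Let $0 \le a < b$, let $W : [a, b] \to \mathbb{R}$ be continuous, and let $\xi \in \mathbb{R}$ satisfy $\xi = \frac{1}{b-a} \int_a^b W(\sigma) \, d\sigma$ and $(b - s)\xi < \int_s^b W(\sigma) \, d\sigma$ for every $s \in (a, b)$. Then $W(a) \le \xi$. -/
open MeasureTheory Real

/-- The key step in the proof of non-negativity of the recollision term `r_W⁺`
(Proposition 4.4): if `ξ = (b-a)⁻¹ ∫_a^b W` and `(b-s)ξ < ∫_s^b W` for every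
`s ∈ (a,b)`, then `W(a) ≤ ξ`. -/
theorem body_velocity_le_molecule_velocity
    (a b : ℝ) (ha : 0 ≤ a) (hab : a < b) (W : ℝ → ℝ)
    (hW : ContinuousOn W (Set.Icc a b)) (ξ : ℝ)
    (hξ : ξ = (b - a)⁻¹ * ∫ σ in a..b, W σ)
    (hsup : ∀ s : ℝ, a < s → s < b → (b - s) * ξ < ∫ σ in s..b, W σ) :
    W a ≤ ξ := by
  by_contra h
  push_neg at h
  set c : ℝ := (ξ + W a) / 2 with hc
  have hcξ : ξ < c := by simp [hc]; linarith
  have hcW : c < W a := by simp [hc]; linarith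
  have hε : (0:ℝ) < W a - c := by linarith
  have hcont := hW a (Set.left_mem_Icc.2 hab.le)
  rw [Metric.continuousWithinAt_iff] at hcont
  obtain ⟨δ, hδ, hball⟩ := hcont (W a - c) hε
  set s : ℝ := min (a + δ / 2) ((a + b) / 2) with hs
  have has : a < s := by
    apply lt_min <;> linarith
  have hsb : s < b := by
    have : s ≤ (a + b) / 2 := min_le_right _ _
    linarith
  have hWc : ∀ σ ∈ Set.Icc a s, c ≤ W σ := by
    intro σ hσ
    have h1 : σ ∈ Set.Icc a b := ⟨hσ.1, le_trans hσ.2 hsb.le⟩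
    have h2 : dist σ a < δ := by
      rw [Real.dist_eq, abs_of_nonneg (by linarith [hσ.1])]
      have : s ≤ a + δ / 2 := min_le_left _ _
      linarith [hσ.2]
    have := hball h1 h2
    rw [Real.dist_eq, abs_lt] at this
    linarith [this.1]
  have hint1 : IntervalIntegrable W volume a s :=
    (hW.mono (Set.Icc_subset_Icc le_rfl hsb.le)).intervalIntegrable_of_Icc has.le
  have hint2 : IntervalIntegrable W volume s b :=
    (hW.mono (Set.Icc_subset_Icc has.le le_rfl)).intervalIntegrable_of_Icc hsb.le
  have hlow : (s - a) * c ≤ ∫ σ in a..s, W σ := by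
    have := intervalIntegral.integral_mono_on has.le
      (intervalIntegrable_const (c := c)) hint1 hWc
    rw [intervalIntegral.integral_const, smul_eq_mul] at this
    linarith
  have hsplit : (∫ σ in a..s, W σ) + ∫ σ in s..b, W σ = ∫ σ in a..b, W σ :=
    intervalIntegral.integral_add_adjacent_intervals hint1 hint2
  have htot : (∫ σ in a..b, W σ) = (b - a) * ξ := by
    rw [hξ, mul_inv_cancel_left₀ (sub_ne_zero.2 hab.ne')]
  have hkey := hsup s has hsb
  nlinarith [hkey, hlow, hsplit, htot, hcξ, sub_pos.2 has]
end

section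
/- Let $d \ge 2$ be an integer and $0 < C_+ \le C_-$. There exists a constant $C > 0$ depending only on $C_+$ and $d$ such that the following holds: for all $\gamma > 0$, $L \ge 1$, $a_1, a_2 \ge 0$, every measurable $K : [0,\infty) \to [C_+, C_-]$, and every measurable $r : [0,\infty) \to [0,\infty)$ with $r(s) \le a_1 (1+s)^{-(d+2)} + a_2 (1 + s/L)^{-(d-1)}$ for all $s \ge 0$, the function $u(t) = \gamma e^{-\int_0^t K(\sigma) d\sigma} + \int_0^t e^{-\int_s^t K(\sigma) d\sigma} r(s) \, ds$ satisfies $u(t) \le \gamma e^{-C_+ t} + C a_1 (1+t)^{-(d+2)} + C a_2 (1 + t/L)^{-(d-1)}$ for all $t \ge 0$. -/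
open MeasureTheory Real

lemma poly_exp_bound (p : ℕ) (c : ℝ) (hc : 0 < c) :
    ∃ M : ℝ, 0 < M ∧ ∀ x : ℝ, 0 ≤ x → (1 + x) ^ p ≤ M * Real.exp (c * x) := by
  set a : ℝ := min 1 (c / (p + 1)) with ha
  have hp1 : (0:ℝ) < p + 1 := by positivity
  have ha0 : 0 < a := lt_min one_pos (div_pos hc hp1)
  have ha1 : a ≤ 1 := min_le_left _ _
  have hac : a * (p + 1) ≤ c := by
    have : a ≤ c / (p + 1) := min_le_right _ _
    calc a * (p+1) ≤ (c / (p+1)) * (p+1) := by nlinarith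
    _ = c := by field_simp
  refine ⟨(1/a)^p, by positivity, fun x hx => ?_⟩
  have key : 1 + x ≤ (1/a) * Real.exp (a * x) := by
    have h1 : a * (1 + x) ≤ 1 + a * x := by nlinarith
    have h2 : 1 + a * x ≤ Real.exp (a * x) := by
      have := Real.add_one_le_exp (a * x); linarith
    have h3 : a * (1 + x) ≤ Real.exp (a * x) := le_trans h1 h2
    calc 1 + x = (1/a) * (a * (1 + x)) := by field_simp
    _ ≤ (1/a) * Real.exp (a * x) := mul_le_mul_of_nonneg_left h3 (by positivity)
  calc (1 + x) ^ p ≤ ((1/a) * Real.exp (a * x)) ^ p :=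
        pow_le_pow_left₀ (by linarith) key p
  _ = (1/a)^p * Real.exp (a * x) ^ p := mul_pow _ _ _
  _ = (1/a)^p * Real.exp ((p * a) * x) := by rw [← Real.exp_nat_mul]; ring_nf
  _ ≤ (1/a)^p * Real.exp (c * x) := by
        apply mul_le_mul_of_nonneg_left _ (by positivity)
        apply Real.exp_le_exp.2
        apply mul_le_mul_of_nonneg_right _ hx
        nlinarith

/-- Upper-bound half of Proposition 4.8: there is a constant `C` depending only on
`C₊` and `d` such that the Duhamel representation
`u(t) = γ e^{-∫_0^t K} + ∫_0^t e^{-∫_s^t K} r(s) ds` of `u' = -K u + r`, `u(0) = γ`,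
with `C₊ ≤ K ≤ C₋` and `0 ≤ r(s) ≤ a₁(1+s)^{-(d+2)} + a₂(1+s/L)^{-(d-1)}`, satisfies
`u(t) ≤ γ e^{-C₊ t} + C a₁ (1+t)^{-(d+2)} + C a₂ (1+t/L)^{-(d-1)}`. -/
theorem duhamel_upper_bound (d : ℕ) (hd : 2 ≤ d) (Cp Cm : ℝ)
    (hCp : 0 < Cp) (hCpm : Cp ≤ Cm) :
    ∃ C : ℝ, 0 < C ∧
      ∀ γ L a₁ a₂ : ℝ, 0 < γ → 1 ≤ L → 0 ≤ a₁ → 0 ≤ a₂ →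
        ∀ K r : ℝ → ℝ, Measurable K → (∀ t : ℝ, Cp ≤ K t ∧ K t ≤ Cm) →
          Measurable r → (∀ t : ℝ, 0 ≤ r t) →
          (∀ s : ℝ, 0 ≤ s →
            r s ≤ a₁ / (1 + s) ^ (d + 2) + a₂ / (1 + s / L) ^ (d - 1)) →
          ∀ t : ℝ, 0 ≤ t →
            γ * Real.exp (-(∫ σ in (0:ℝ)..t, K σ)) +
                (∫ s in (0:ℝ)..t, Real.exp (-(∫ σ in s..t, K σ)) * r s) ≤
              γ * Real.exp (-Cp * t) + C * (a₁ / (1 + t) ^ (d + 2)) +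
                C * (a₂ / (1 + t / L) ^ (d - 1)) := by
  obtain ⟨M, hM, hMbd⟩ := poly_exp_bound (d + 2) (Cp / 2) (by positivity)
  refine ⟨2 * M / Cp, by positivity, ?_⟩
  intro γ L a₁ a₂ hγ hL ha₁ ha₂ K r hKm hKbd hrm hr0 hrbd t ht
  have hL0 : (0:ℝ) < L := lt_of_lt_of_le one_pos hL
  have hKint : ∀ a b : ℝ, IntervalIntegrable K volume a b := by
    intro a b
    apply IntervalIntegrable.mono_fun' (g := fun _ => Cm) intervalIntegrable_const
      hKm.aestronglyMeasurable.restrict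
    filter_upwards with x
    rw [Real.norm_eq_abs, abs_of_pos (lt_of_lt_of_le hCp (hKbd x).1)]
    exact (hKbd x).2
  have hKlow : ∀ a b : ℝ, a ≤ b → Cp * (b - a) ≤ ∫ σ in a..b, K σ := by
    intro a b hab
    have h := intervalIntegral.integral_mono_on (μ := volume) hab
      (intervalIntegrable_const (c := Cp)) (hKint a b) (fun x _ => (hKbd x).1)
    rwa [intervalIntegral.integral_const, smul_eq_mul, mul_comm] at h
  have h1t : (0:ℝ) < 1 + t := by linarith
  have h1tL : (0:ℝ) < 1 + t / L := by positivity
  set A : ℝ := a₁ / (1 + t) ^ (d + 2) + a₂ / (1 + t / L) ^ (d - 1) with hA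
  have hA0 : 0 ≤ A := by positivity
  -- pointwise bound on the integrand
  have hpt : ∀ s ∈ Set.Icc (0:ℝ) t,
      Real.exp (-(∫ σ in s..t, K σ)) * r s ≤ M * A * Real.exp (-(Cp/2) * (t - s)) := by
    intro s hs
    obtain ⟨hs0, hst⟩ := hs
    set u : ℝ := t - s with hu
    have hu0 : 0 ≤ u := by simp only [hu]; linarith
    have h1s : (0:ℝ) < 1 + s := by linarith
    have h1sL : (0:ℝ) < 1 + s / L := by positivity
    have hexp : Real.exp (-(∫ σ in s..t, K σ)) ≤ Real.exp (-(Cp * u)) :=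
      Real.exp_le_exp.2 (neg_le_neg (hKlow s t hst))
    have hMu : (1 + u) ^ (d + 2) ≤ M * Real.exp (Cp/2 * u) := hMbd u hu0
    have e1 : Real.exp (-(Cp * u)) * Real.exp (Cp/2 * u) = Real.exp (-(Cp/2) * u) := by
      rw [← Real.exp_add]; congr 1; ring
    -- term 1
    have hb2 : (1 + t) ^ (d + 2) ≤ M * Real.exp (Cp/2 * u) * (1 + s) ^ (d + 2) := by
      refine le_trans ?_ (mul_le_mul_of_nonneg_right hMu (by positivity))
      rw [← mul_pow]
      apply pow_le_pow_left₀ (by linarith)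
      nlinarith
    have hT1 : Real.exp (-(Cp * u)) * (a₁ / (1 + s) ^ (d + 2)) ≤
        M * (a₁ / (1 + t) ^ (d + 2)) * Real.exp (-(Cp/2) * u) := by
      rw [show Real.exp (-(Cp * u)) * (a₁ / (1 + s) ^ (d + 2))
            = (Real.exp (-(Cp * u)) * a₁) / (1 + s) ^ (d + 2) from by ring,
          show M * (a₁ / (1 + t) ^ (d + 2)) * Real.exp (-(Cp/2) * u)
            = (M * a₁ * Real.exp (-(Cp/2) * u)) / (1 + t) ^ (d + 2) from by ring,
          div_le_div_iff₀ (by positivity) (by positivity)]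
      calc Real.exp (-(Cp * u)) * a₁ * (1 + t) ^ (d + 2)
          ≤ Real.exp (-(Cp * u)) * a₁ * (M * Real.exp (Cp/2 * u) * (1 + s) ^ (d + 2)) :=
            mul_le_mul_of_nonneg_left hb2 (by positivity)
        _ = M * a₁ * Real.exp (-(Cp/2) * u) * (1 + s) ^ (d + 2) := by rw [← e1]; ring
    -- term 2
    have hb2' : (1 + t / L) ^ (d - 1) ≤ M * Real.exp (Cp/2 * u) * (1 + s / L) ^ (d - 1) := by
      have hstep : (1 + t / L) ^ (d - 1) ≤ (1 + u) ^ (d - 1) * (1 + s / L) ^ (d - 1) := by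
        rw [← mul_pow]
        apply pow_le_pow_left₀ (by positivity)
        have huL : u / L ≤ u := div_le_self hu0 hL
        have htL : t / L = s / L + u / L := by rw [hu]; ring
        nlinarith [mul_nonneg hu0 (by positivity : (0:ℝ) ≤ s / L)]
      refine le_trans hstep (mul_le_mul_of_nonneg_right (le_trans ?_ hMu) (by positivity))
      exact pow_le_pow_right₀ (by linarith) (by omega)
    have hT2 : Real.exp (-(Cp * u)) * (a₂ / (1 + s / L) ^ (d - 1)) ≤
        M * (a₂ / (1 + t / L) ^ (d - 1)) * Real.exp (-(Cp/2) * u) := by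
      rw [show Real.exp (-(Cp * u)) * (a₂ / (1 + s / L) ^ (d - 1))
            = (Real.exp (-(Cp * u)) * a₂) / (1 + s / L) ^ (d - 1) from by ring,
          show M * (a₂ / (1 + t / L) ^ (d - 1)) * Real.exp (-(Cp/2) * u)
            = (M * a₂ * Real.exp (-(Cp/2) * u)) / (1 + t / L) ^ (d - 1) from by ring,
          div_le_div_iff₀ (by positivity) (by positivity)]
      calc Real.exp (-(Cp * u)) * a₂ * (1 + t / L) ^ (d - 1)
          ≤ Real.exp (-(Cp * u)) * a₂ * (M * Real.exp (Cp/2 * u) * (1 + s / L) ^ (d - 1)) :=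
            mul_le_mul_of_nonneg_left hb2' (by positivity)
        _ = M * a₂ * Real.exp (-(Cp/2) * u) * (1 + s / L) ^ (d - 1) := by rw [← e1]; ring
    calc Real.exp (-(∫ σ in s..t, K σ)) * r s
        ≤ Real.exp (-(Cp * u)) * r s := mul_le_mul_of_nonneg_right hexp (hr0 s)
      _ ≤ Real.exp (-(Cp * u)) * (a₁ / (1 + s) ^ (d + 2) + a₂ / (1 + s / L) ^ (d - 1)) :=
          mul_le_mul_of_nonneg_left (hrbd s hs0) (le_of_lt (Real.exp_pos _))
      _ = Real.exp (-(Cp * u)) * (a₁ / (1 + s) ^ (d + 2)) +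
            Real.exp (-(Cp * u)) * (a₂ / (1 + s / L) ^ (d - 1)) := by ring
      _ ≤ M * (a₁ / (1 + t) ^ (d + 2)) * Real.exp (-(Cp/2) * u) +
            M * (a₂ / (1 + t / L) ^ (d - 1)) * Real.exp (-(Cp/2) * u) := add_le_add hT1 hT2
      _ = M * A * Real.exp (-(Cp/2) * u) := by rw [hA]; ring
  -- integrability of the integrand
  have hFcont : Continuous (fun s : ℝ => ∫ σ in (0:ℝ)..s, K σ) :=
    intervalIntegral.continuous_primitive hKint 0
  have hFs : ∀ s : ℝ, (∫ σ in s..t, K σ) = (∫ σ in (0:ℝ)..t, K σ) - ∫ σ in (0:ℝ)..s, K σ :=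
    fun s => (intervalIntegral.integral_interval_sub_left (hKint 0 t) (hKint 0 s)).symm
  have hmeas : Measurable (fun s => Real.exp (-(∫ σ in s..t, K σ)) * r s) := by
    have heq : (fun s => Real.exp (-(∫ σ in s..t, K σ)) * r s)
        = fun s => Real.exp (-((∫ σ in (0:ℝ)..t, K σ) - ∫ σ in (0:ℝ)..s, K σ)) * r s :=
      funext fun s => by rw [hFs]
    rw [heq]
    exact ((continuous_const.sub hFcont).neg.rexp).measurable.mul hrm
  have hfint : IntervalIntegrable (fun s => Real.exp (-(∫ σ in s..t, K σ)) * r s) volume 0 t := by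
    apply IntervalIntegrable.mono_fun' (g := fun _ => a₁ + a₂) intervalIntegrable_const
      hmeas.aestronglyMeasurable.restrict
    rw [Set.uIoc_of_le ht]
    filter_upwards [ae_restrict_mem measurableSet_Ioc] with x hx
    obtain ⟨hx0, hxt⟩ := hx
    have hx0' : (0:ℝ) ≤ x := le_of_lt hx0
    have hexp1 : Real.exp (-(∫ σ in x..t, K σ)) ≤ 1 := by
      rw [Real.exp_le_one_iff]
      have := hKlow x t hxt
      nlinarith
    have hr1 : r x ≤ a₁ + a₂ := by
      have h1 : a₁ / (1 + x) ^ (d + 2) ≤ a₁ := by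
        apply div_le_self ha₁ (one_le_pow₀ (by linarith))
      have h2 : a₂ / (1 + x / L) ^ (d - 1) ≤ a₂ := by
        apply div_le_self ha₂ (one_le_pow₀ (by nlinarith [div_nonneg hx0' hL0.le]))
      linarith [hrbd x hx0']
    rw [Real.norm_eq_abs, abs_of_nonneg (mul_nonneg (le_of_lt (Real.exp_pos _)) (hr0 x))]
    nlinarith [Real.exp_pos (-(∫ σ in x..t, K σ)), hr0 x]
  have hgint : IntervalIntegrable (fun s => M * A * Real.exp (-(Cp/2) * (t - s))) volume 0 t := by
    apply Continuous.intervalIntegrable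
    fun_prop
  -- compare integrals
  have hintle : (∫ s in (0:ℝ)..t, Real.exp (-(∫ σ in s..t, K σ)) * r s) ≤
      ∫ s in (0:ℝ)..t, M * A * Real.exp (-(Cp/2) * (t - s)) :=
    intervalIntegral.integral_mono_on ht hfint hgint hpt
  -- compute the RHS integral
  have hJ : (∫ s in (0:ℝ)..t, Real.exp (-(Cp/2) * (t - s))) ≤ 2 / Cp := by
    have hcomp : (∫ s in (0:ℝ)..t, Real.exp (-(Cp/2) * (t - s)))
        = ∫ x in (0:ℝ)..t, Real.exp (-(Cp/2) * x) := by
      have := intervalIntegral.integral_comp_sub_left (a := (0:ℝ)) (b := t)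
        (fun x => Real.exp (-(Cp/2) * x)) t
      simpa using this
    rw [hcomp]
    have hderiv : ∀ x ∈ Set.uIcc (0:ℝ) t,
        HasDerivAt (fun x => -(2/Cp) * Real.exp (-(Cp/2) * x)) (Real.exp (-(Cp/2) * x)) x := by
      intro x _
      have h := (((hasDerivAt_id x).const_mul (-(Cp/2))).exp).const_mul (-(2/Cp))
      refine h.congr_deriv ?_
      simp only [id, mul_one]
      rw [show -(2/Cp) * (rexp (-(Cp/2)*x) * -(Cp/2)) = rexp (-(Cp/2)*x) * ((2/Cp)*(Cp/2)) by ring,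
        div_mul_div_comm, mul_comm 2 Cp, div_self (by positivity), mul_one]
    have hint : IntervalIntegrable (fun x => Real.exp (-(Cp/2) * x)) volume 0 t := by
      apply Continuous.intervalIntegrable; fun_prop
    rw [intervalIntegral.integral_eq_sub_of_hasDerivAt hderiv hint]
    have := Real.exp_pos (-(Cp/2) * t)
    have h0 : Real.exp (-(Cp/2) * (0:ℝ)) = 1 := by norm_num
    rw [h0]
    have h2 : (0:ℝ) < 2 / Cp := by positivity
    nlinarith
  have hg_eq : (∫ s in (0:ℝ)..t, M * A * Real.exp (-(Cp/2) * (t - s)))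
      = M * A * ∫ s in (0:ℝ)..t, Real.exp (-(Cp/2) * (t - s)) :=
    intervalIntegral.integral_const_mul _ _
  -- first term
  have hT0 : γ * Real.exp (-(∫ σ in (0:ℝ)..t, K σ)) ≤ γ * Real.exp (-Cp * t) := by
    apply mul_le_mul_of_nonneg_left _ (le_of_lt hγ)
    apply Real.exp_le_exp.2
    have := hKlow 0 t ht
    simp only [sub_zero] at this
    linarith
  -- assemble
  have hfinal : (∫ s in (0:ℝ)..t, Real.exp (-(∫ σ in s..t, K σ)) * r s) ≤ (2 * M / Cp) * A := by
    calc (∫ s in (0:ℝ)..t, Real.exp (-(∫ σ in s..t, K σ)) * r s)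
        ≤ M * A * ∫ s in (0:ℝ)..t, Real.exp (-(Cp/2) * (t - s)) := by rw [← hg_eq]; exact hintle
      _ ≤ M * A * (2 / Cp) := mul_le_mul_of_nonneg_left hJ (by positivity)
      _ = (2 * M / Cp) * A := by ring
  have hCA : (2 * M / Cp) * A = (2 * M / Cp) * (a₁ / (1 + t) ^ (d + 2)) +
      (2 * M / Cp) * (a₂ / (1 + t / L) ^ (d - 1)) := by rw [hA]; ring
  linarith
end
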